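/- Let Φ(A) = Σ_k V_k* A V_k be a unital map on n×n complex matrices (Σ_k V_k* V_k = I). If A commutes with V_j V_k* for all indices j,k, then Φ(A*A) = Φ(A)*Φ(A) and Φ(AA*) = Φ(A)Φ(A)*, i.e. A lies in the multiplicative domain of Φ. -/
import Mathlib


open Matrix Finset

theorem stmt_2 {n m : ℕ} (V : Fin m → Matrix (Fin n) (Fin n) ℂ)
    (hV : ∑ k, (V k)ᴴ * V k = 1)
    (A : Matrix (Fin n) (Fin n) ℂ)
    (hcomm : ∀ j k, A * (V j * (V k)ᴴ) = (V j * (V k)ᴴ) * A) :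
    (∑ k, (V k)ᴴ * (Aᴴ * A) * V k)
      = (∑ k, (V k)ᴴ * A * V k)ᴴ * (∑ k, (V k)ᴴ * A * V k) ∧
    (∑ k, (V k)ᴴ * (A * Aᴴ) * V k)
      = (∑ k, (V k)ᴴ * A * V k) * (∑ k, (V k)ᴴ * A * V k)ᴴ := by
  have hcomm' : ∀ j k, Aᴴ * (V j * (V k)ᴴ) = (V j * (V k)ᴴ) * Aᴴ := by
    intro j k
    have := congrArg Matrix.conjTranspose (hcomm k j)
    simpa [Matrix.conjTranspose_mul, mul_assoc] using this.symm
  have key1 : ∀ j k, ((V j)ᴴ * A * V j)ᴴ * ((V k)ᴴ * A * V k)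
      = ((V j)ᴴ * V j) * ((V k)ᴴ * (Aᴴ * A) * V k) := by
    intro j k
    calc ((V j)ᴴ * A * V j)ᴴ * ((V k)ᴴ * A * V k)
        = (V j)ᴴ * (Aᴴ * (V j * (V k)ᴴ)) * (A * V k) := by
          simp [Matrix.conjTranspose_mul, mul_assoc]
      _ = (V j)ᴴ * ((V j * (V k)ᴴ) * Aᴴ) * (A * V k) := by rw [hcomm']
      _ = ((V j)ᴴ * V j) * ((V k)ᴴ * (Aᴴ * A) * V k) := by
          simp [mul_assoc]
  have key2 : ∀ j k, ((V j)ᴴ * A * V j) * ((V k)ᴴ * A * V k)ᴴ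
      = ((V j)ᴴ * V j) * ((V k)ᴴ * (A * Aᴴ) * V k) := by
    intro j k
    calc ((V j)ᴴ * A * V j) * ((V k)ᴴ * A * V k)ᴴ
        = (V j)ᴴ * (A * (V j * (V k)ᴴ)) * (Aᴴ * V k) := by
          simp [Matrix.conjTranspose_mul, mul_assoc]
      _ = (V j)ᴴ * ((V j * (V k)ᴴ) * A) * (Aᴴ * V k) := by rw [hcomm]
      _ = ((V j)ᴴ * V j) * ((V k)ᴴ * (A * Aᴴ) * V k) := by
          simp [mul_assoc]
  constructor
  · symm
    calc (∑ k, (V k)ᴴ * A * V k)ᴴ * (∑ k, (V k)ᴴ * A * V k)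
        = ∑ j, ∑ k, ((V j)ᴴ * A * V j)ᴴ * ((V k)ᴴ * A * V k) := by
          rw [Matrix.conjTranspose_sum, Finset.sum_mul]
          exact Finset.sum_congr rfl fun j _ => Finset.mul_sum _ _ _
      _ = ∑ j, ∑ k, ((V j)ᴴ * V j) * ((V k)ᴴ * (Aᴴ * A) * V k) := by
          exact Finset.sum_congr rfl fun j _ => Finset.sum_congr rfl fun k _ => key1 j k
      _ = (∑ j, (V j)ᴴ * V j) * (∑ k, (V k)ᴴ * (Aᴴ * A) * V k) := by
          rw [Finset.sum_mul]
          exact Finset.sum_congr rfl fun j _ => (Finset.mul_sum _ _ _).symm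
      _ = ∑ k, (V k)ᴴ * (Aᴴ * A) * V k := by rw [hV, one_mul]
  · symm
    calc (∑ k, (V k)ᴴ * A * V k) * (∑ k, (V k)ᴴ * A * V k)ᴴ
        = ∑ j, ∑ k, ((V j)ᴴ * A * V j) * ((V k)ᴴ * A * V k)ᴴ := by
          rw [Matrix.conjTranspose_sum, Finset.sum_mul]
          exact Finset.sum_congr rfl fun j _ => Finset.mul_sum _ _ _
      _ = ∑ j, ∑ k, ((V j)ᴴ * V j) * ((V k)ᴴ * (A * Aᴴ) * V k) := by
          exact Finset.sum_congr rfl fun j _ => Finset.sum_congr rfl fun k _ => key2 j k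
      _ = (∑ j, (V j)ᴴ * V j) * (∑ k, (V k)ᴴ * (A * Aᴴ) * V k) := by
          rw [Finset.sum_mul]
          exact Finset.sum_congr rfl fun j _ => (Finset.mul_sum _ _ _).symm
      _ = ∑ k, (V k)ᴴ * (A * Aᴴ) * V k := by rw [hV, one_mul]
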